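/- Let A ≥ 1 and let λ > 0 satisfy λ < 1/(16(1+A)²). Define the nonlinear operator K on pairs (ψ, q) ∈ C(Δ_λ) × C([0,λ]) (where Δ_λ = {(y,t) : 0 ≤ y ≤ t ≤ 2λ - y}) by K(ψ,q) = (K₁(ψ,q), K₂(ψ,q)) with K₁(ψ,q)(y,t) = -∫₀^y q(η)[g₁(η, t-η+y) + ∫₀^η ψ(ξ, t-η+ξ) dξ] dη + g₂(y,t) and K₂(ψ,q)(y) = -2∫₀^y q(η)[g₁(η, 2y-η) + ∫₀^η ψ(ξ, y-η+ξ) dξ] dη + g₃(y), where g₁, g₂, g₃ are given continuous functions bounded in absolute value by A. Then K maps the product of closed balls of radius 2A (in sup norm) into itself and is a contraction with contraction constant at most 3/8 with respect to the norm ‖(ψ,q)‖ = max(‖ψ‖_∞, ‖q‖_∞). In particular K has a unique fixed point in this ball. -/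

import Mathlib

open Set MeasureTheory intervalIntegral

private lemma absInt {f : ℝ → ℝ} {η B : ℝ} (hη : 0 ≤ η)
    (h : ∀ x ∈ Ioc (0:ℝ) η, |f x| ≤ B) :
    |∫ x in (0:ℝ)..η, f x| ≤ B * η := by
  have h2 : ∀ x ∈ uIoc (0:ℝ) η, ‖f x‖ ≤ B := by
    intro x hx
    rw [uIoc_of_le hη] at hx
    simpa [Real.norm_eq_abs] using h x hx
  have := intervalIntegral.norm_integral_le_of_norm_le_const h2
  simpa [Real.norm_eq_abs, abs_of_nonneg hη] using this

private lemma contJ {ψ : ℝ × ℝ → ℝ} (hψc : Continuous ψ) (t : ℝ) :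
    Continuous fun η : ℝ => ∫ ζ in (0:ℝ)..η, ψ (ζ, t - η + ζ) := by
  exact continuous_parametric_intervalIntegral_of_continuous (μ := volume)
    (f := fun (η : ℝ) (ζ : ℝ) => ψ (ζ, t - η + ζ))
    (hψc.comp (by fun_prop) : Continuous fun x : ℝ × ℝ => ψ (x.2, t - x.1 + x.2))
    continuous_id

private lemma contK1core {g₁ ψ : ℝ × ℝ → ℝ} {q : ℝ → ℝ}
    (hg₁c : Continuous g₁) (hψc : Continuous ψ) (hqc : Continuous q) :
    Continuous fun p : ℝ × ℝ => ∫ η in (0:ℝ)..p.1,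
      q η * (g₁ (η, p.2 - η + p.1) + ∫ ζ in (0:ℝ)..η, ψ (ζ, p.2 - η + ζ)) := by
  apply continuous_parametric_intervalIntegral_of_continuous (μ := volume) ?_ continuous_fst
  apply Continuous.mul (hqc.comp continuous_snd)
  apply Continuous.add (hg₁c.comp (by fun_prop))
  exact continuous_parametric_intervalIntegral_of_continuous (μ := volume)
    (f := fun (x : (ℝ × ℝ) × ℝ) (ζ : ℝ) => ψ (ζ, x.1.2 - x.2 + ζ))
    (hψc.comp (by fun_prop) :
      Continuous fun w : ((ℝ × ℝ) × ℝ) × ℝ => ψ (w.2, w.1.1.2 - w.1.2 + w.2))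
    continuous_snd

private lemma contK2core {g₁ ψ : ℝ × ℝ → ℝ} {q : ℝ → ℝ}
    (hg₁c : Continuous g₁) (hψc : Continuous ψ) (hqc : Continuous q) :
    Continuous fun s : ℝ => ∫ η in (0:ℝ)..s,
      q η * (g₁ (η, 2 * s - η) + ∫ ζ in (0:ℝ)..η, ψ (ζ, s - η + ζ)) := by
  apply continuous_parametric_intervalIntegral_of_continuous (μ := volume) ?_ continuous_id
  apply Continuous.mul (hqc.comp continuous_snd)
  apply Continuous.add (hg₁c.comp (by fun_prop))
  exact continuous_parametric_intervalIntegral_of_continuous (μ := volume)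
    (f := fun (x : ℝ × ℝ) (ζ : ℝ) => ψ (ζ, x.1 - x.2 + ζ))
    (hψc.comp (by fun_prop) : Continuous fun w : (ℝ × ℝ) × ℝ => ψ (w.2, w.1.1 - w.1.2 + w.2))
    continuous_snd

/-- Pointwise bound on the basic Volterra integral. -/
private lemma coreB {A lam : ℝ} {g₁ ψ : ℝ × ℝ → ℝ} {q : ℝ → ℝ}
    (hA : 1 ≤ A) (hg₁ : ∀ p, |g₁ p| ≤ A)
    (hψ : ∀ a b : ℝ, 0 ≤ a → a ≤ b → b ≤ 2 * lam - a → |ψ (a, b)| ≤ 2 * A)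
    (hq : ∀ s ∈ Icc (0:ℝ) lam, |q s| ≤ 2 * A)
    {y t : ℝ} (h1 : 0 ≤ y) (h2 : y ≤ t) (h3 : t ≤ 2 * lam - y) :
    |∫ η in (0:ℝ)..y, q η * (g₁ (η, t - η + y) + ∫ ζ in (0:ℝ)..η, ψ (ζ, t - η + ζ))|
      ≤ (2 * A) * (A + 2 * A * lam) * y := by
  apply absInt h1
  intro η hη
  have hy : y ≤ lam := by linarith
  have hqb : |q η| ≤ 2 * A := hq η ⟨hη.1.le, by linarith [hη.2]⟩
  have hinner : |∫ ζ in (0:ℝ)..η, ψ (ζ, t - η + ζ)| ≤ (2 * A) * η := by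
    apply absInt hη.1.le
    intro ζ hζ
    exact hψ ζ (t - η + ζ) hζ.1.le (by linarith [hη.2, hζ.2]) (by linarith [hη.2, hζ.2])
  have h4 : |g₁ (η, t - η + y) + ∫ ζ in (0:ℝ)..η, ψ (ζ, t - η + ζ)| ≤ A + 2 * A * lam := by
    refine (abs_add_le _ _).trans ?_
    have := hg₁ (η, t - η + y)
    nlinarith [hη.2, hη.1.le]
  rw [abs_mul]
  exact mul_le_mul hqb h4 (abs_nonneg _) (by positivity)

/-- Pointwise bound on the difference of two basic Volterra integrals. -/
private lemma coreD {A lam M : ℝ} {g₁ ψ ψ' : ℝ × ℝ → ℝ} {q q' : ℝ → ℝ}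
    (hA : 1 ≤ A) (hlam : 0 < lam)
    (hψc : Continuous ψ) (hψ'c : Continuous ψ')
    (hqc : Continuous q) (hq'c : Continuous q') (hg₁c : Continuous g₁)
    (hg₁ : ∀ p, |g₁ p| ≤ A)
    (hψ : ∀ a b : ℝ, 0 ≤ a → a ≤ b → b ≤ 2 * lam - a → |ψ (a, b)| ≤ 2 * A)
    (hq' : ∀ s ∈ Icc (0:ℝ) lam, |q' s| ≤ 2 * A)
    (hdψ : ∀ a b : ℝ, 0 ≤ a → a ≤ b → b ≤ 2 * lam - a → |ψ (a, b) - ψ' (a, b)| ≤ M)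
    (hdq : ∀ s ∈ Icc (0:ℝ) lam, |q s - q' s| ≤ M)
    {y t : ℝ} (h1 : 0 ≤ y) (h2 : y ≤ t) (h3 : t ≤ 2 * lam - y) :
    |(∫ η in (0:ℝ)..y, q η * (g₁ (η, t - η + y) + ∫ ζ in (0:ℝ)..η, ψ (ζ, t - η + ζ)))
      - ∫ η in (0:ℝ)..y, q' η * (g₁ (η, t - η + y) + ∫ ζ in (0:ℝ)..η, ψ' (ζ, t - η + ζ))|
      ≤ (A * M + 4 * A * lam * M) * y := by
  have hy : y ≤ lam := by linarith
  have hM0 : 0 ≤ M := le_trans (abs_nonneg _) (hdq 0 ⟨le_refl _, hlam.le⟩)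
  have hFc : Continuous fun η : ℝ =>
      q η * (g₁ (η, t - η + y) + ∫ ζ in (0:ℝ)..η, ψ (ζ, t - η + ζ)) :=
    hqc.mul ((hg₁c.comp (by fun_prop)).add (contJ hψc t))
  have hF'c : Continuous fun η : ℝ =>
      q' η * (g₁ (η, t - η + y) + ∫ ζ in (0:ℝ)..η, ψ' (ζ, t - η + ζ)) :=
    hq'c.mul ((hg₁c.comp (by fun_prop)).add (contJ hψ'c t))
  rw [← intervalIntegral.integral_sub (hFc.intervalIntegrable _ _) (hF'c.intervalIntegrable _ _)]
  apply absInt h1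
  intro η hη
  have hqb : |q' η| ≤ 2 * A := hq' η ⟨hη.1.le, by linarith [hη.2]⟩
  have hdqb : |q η - q' η| ≤ M := hdq η ⟨hη.1.le, by linarith [hη.2]⟩
  have hinner : |∫ ζ in (0:ℝ)..η, ψ (ζ, t - η + ζ)| ≤ (2 * A) * η := by
    apply absInt hη.1.le
    intro ζ hζ
    exact hψ ζ (t - η + ζ) hζ.1.le (by linarith [hη.2, hζ.2]) (by linarith [hη.2, hζ.2])
  have hJd : |(∫ ζ in (0:ℝ)..η, ψ (ζ, t - η + ζ)) - ∫ ζ in (0:ℝ)..η, ψ' (ζ, t - η + ζ)|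
      ≤ M * η := by
    have hi1 : Continuous fun ζ : ℝ => ψ (ζ, t - η + ζ) := hψc.comp (by fun_prop)
    have hi2 : Continuous fun ζ : ℝ => ψ' (ζ, t - η + ζ) := hψ'c.comp (by fun_prop)
    rw [← intervalIntegral.integral_sub (hi1.intervalIntegrable _ _) (hi2.intervalIntegrable _ _)]
    apply absInt hη.1.le
    intro ζ hζ
    exact hdψ ζ (t - η + ζ) hζ.1.le (by linarith [hη.2, hζ.2]) (by linarith [hη.2, hζ.2])
  have h4 : |g₁ (η, t - η + y) + ∫ ζ in (0:ℝ)..η, ψ (ζ, t - η + ζ)| ≤ A + 2 * A * lam := by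
    refine (abs_add_le _ _).trans ?_
    have := hg₁ (η, t - η + y)
    nlinarith [hη.2, hη.1.le]
  have key : q η * (g₁ (η, t - η + y) + ∫ ζ in (0:ℝ)..η, ψ (ζ, t - η + ζ))
      - q' η * (g₁ (η, t - η + y) + ∫ ζ in (0:ℝ)..η, ψ' (ζ, t - η + ζ))
      = (q η - q' η) * (g₁ (η, t - η + y) + ∫ ζ in (0:ℝ)..η, ψ (ζ, t - η + ζ))
        + q' η * ((∫ ζ in (0:ℝ)..η, ψ (ζ, t - η + ζ)) - ∫ ζ in (0:ℝ)..η, ψ' (ζ, t - η + ζ)) := by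
    ring
  rw [key]
  calc |(q η - q' η) * (g₁ (η, t - η + y) + ∫ ζ in (0:ℝ)..η, ψ (ζ, t - η + ζ))
        + q' η * ((∫ ζ in (0:ℝ)..η, ψ (ζ, t - η + ζ)) - ∫ ζ in (0:ℝ)..η, ψ' (ζ, t - η + ζ))|
      ≤ |q η - q' η| * |g₁ (η, t - η + y) + ∫ ζ in (0:ℝ)..η, ψ (ζ, t - η + ζ)|
        + |q' η| * |(∫ ζ in (0:ℝ)..η, ψ (ζ, t - η + ζ)) - ∫ ζ in (0:ℝ)..η, ψ' (ζ, t - η + ζ)| := by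
        refine (abs_add_le _ _).trans ?_
        rw [abs_mul, abs_mul]
    _ ≤ M * (A + 2 * A * lam) + (2 * A) * (M * η) := by
        refine add_le_add (mul_le_mul hdqb h4 (abs_nonneg _) hM0)
          (mul_le_mul hqb hJd (abs_nonneg _) (by positivity))
    _ ≤ A * M + 4 * A * lam * M := by
        nlinarith [mul_nonneg (mul_nonneg (by linarith : (0:ℝ) ≤ 2 * A) hM0)
          (by linarith [hη.2] : (0:ℝ) ≤ lam - η)]

private lemma arithA {A lam y v : ℝ} (hA : 1 ≤ A) (h0 : 0 ≤ y) (hy : y ≤ lam)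
    (hAl : A * lam ≤ 1 / 64) (hv : v ≤ 2 * A * (A + 2 * A * lam) * y) :
    2 * v + A ≤ 2 * A := by
  have hA0 : (0:ℝ) < A := by linarith
  have hl0 : (0:ℝ) ≤ lam := by nlinarith
  have hAy : A * y ≤ 1 / 64 := le_trans (by nlinarith) hAl
  nlinarith [mul_le_mul hAl hAy (by positivity) (by positivity),
    mul_le_mul_of_nonneg_left hAy hA0.le]

private lemma arithB {A lam y M v : ℝ} (hA : 1 ≤ A) (h0 : 0 ≤ y) (hy : y ≤ lam)
    (hAl : A * lam ≤ 1 / 64) (hM : 0 ≤ M)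
    (hv : v ≤ (A * M + 4 * A * lam * M) * y) :
    2 * v ≤ 3 / 8 * M := by
  have hA0 : (0:ℝ) < A := by linarith
  have hl0 : (0:ℝ) ≤ lam := by nlinarith
  have hAy : A * y ≤ 1 / 64 := le_trans (by nlinarith) hAl
  have hyl : y ≤ 1 / 64 := by nlinarith
  nlinarith [mul_le_mul_of_nonneg_left hAy hM,
    mul_le_mul hAl (mul_le_mul_of_nonneg_left hyl hM) (by positivity) (by positivity),
    mul_nonneg hM h0]

private lemma K2eq (g₁ ψ : ℝ × ℝ → ℝ) (q : ℝ → ℝ) (s : ℝ) :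
    (∫ η in (0:ℝ)..s, q η * (g₁ (η, 2 * s - η) + ∫ ζ in (0:ℝ)..η, ψ (ζ, s - η + ζ)))
    = ∫ η in (0:ℝ)..s, q η * (g₁ (η, s - η + s) + ∫ ζ in (0:ℝ)..η, ψ (ζ, s - η + ζ)) := by
  apply intervalIntegral.integral_congr
  intro η _
  dsimp only
  rw [show (2 * s - η : ℝ) = s - η + s by ring]

/-- Retraction of `ℝ` onto `[0, lam]`. -/
private noncomputable def rI (lam s : ℝ) : ℝ := max 0 (min s lam)

/-- Retraction of `ℝ²` onto the triangle. -/
private noncomputable def rT (lam : ℝ) (p : ℝ × ℝ) : ℝ × ℝ :=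
  (rI lam p.1, max (rI lam p.1) (min p.2 (2 * lam - rI lam p.1)))

private lemma rI_mem {lam : ℝ} (hl : 0 ≤ lam) (s : ℝ) : rI lam s ∈ Icc (0:ℝ) lam :=
  ⟨le_max_left _ _, max_le hl (min_le_right _ _)⟩

private lemma rI_cont (lam : ℝ) : Continuous (rI lam) :=
  continuous_const.max (continuous_id.min continuous_const)

private lemma rI_id {lam s : ℝ} (hs : s ∈ Icc (0:ℝ) lam) : rI lam s = s := by
  rw [rI, min_eq_left hs.2, max_eq_right hs.1]

private lemma rT_mem {lam : ℝ} (hl : 0 ≤ lam) (p : ℝ × ℝ) :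
    0 ≤ (rT lam p).1 ∧ (rT lam p).1 ≤ (rT lam p).2 ∧ (rT lam p).2 ≤ 2 * lam - (rT lam p).1 := by
  have h1 : rI lam p.1 ≤ lam := (rI_mem hl p.1).2
  refine ⟨(rI_mem hl p.1).1, le_max_left _ _, ?_⟩
  exact max_le (by simp only [rT]; linarith) (min_le_right _ _)

private lemma rT_cont (lam : ℝ) : Continuous (rT lam) := by
  have h := rI_cont lam
  unfold rT
  fun_prop

private lemma rT_id {lam : ℝ} {p : ℝ × ℝ}
    (h1 : 0 ≤ p.1) (h2 : p.1 ≤ p.2) (h3 : p.2 ≤ 2 * lam - p.1) : rT lam p = p := by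
  have hy : p.1 ≤ lam := by linarith
  have e1 : rI lam p.1 = p.1 := rI_id ⟨h1, hy⟩
  rw [rT, e1, min_eq_left h3, max_eq_right h2]

/-- The nonlinear Volterra operator `K = (K₁, K₂)` maps the ball of radius `2A`
into itself, is a `3/8`-contraction there, and has a unique fixed point in this ball. -/
theorem stmt0
    (A lam : ℝ) (hA : 1 ≤ A) (hlam : 0 < lam) (hlam' : lam < 1 / (16 * (1 + A) ^ 2))
    (g₁ g₂ : ℝ × ℝ → ℝ) (g₃ : ℝ → ℝ)
    (hg₁c : Continuous g₁) (hg₂c : Continuous g₂) (hg₃c : Continuous g₃)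
    (hg₁ : ∀ p, |g₁ p| ≤ A) (hg₂ : ∀ p, |g₂ p| ≤ A) (hg₃ : ∀ s, |g₃ s| ≤ A)
    (Δ : Set (ℝ × ℝ)) (hΔ : Δ = {p : ℝ × ℝ | 0 ≤ p.1 ∧ p.1 ≤ p.2 ∧ p.2 ≤ 2 * lam - p.1})
    (K₁ : (ℝ × ℝ → ℝ) → (ℝ → ℝ) → ℝ × ℝ → ℝ)
    (K₂ : (ℝ × ℝ → ℝ) → (ℝ → ℝ) → ℝ → ℝ)
    (hK₁ : ∀ ψ q p, K₁ ψ q p =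
      -(∫ η in (0:ℝ)..p.1, q η * (g₁ (η, p.2 - η + p.1)
          + ∫ ζ in (0:ℝ)..η, ψ (ζ, p.2 - η + ζ))) + g₂ p)
    (hK₂ : ∀ ψ q y, K₂ ψ q y =
      -(2 * ∫ η in (0:ℝ)..y, q η * (g₁ (η, 2 * y - η)
          + ∫ ζ in (0:ℝ)..η, ψ (ζ, y - η + ζ))) + g₃ y) :
    -- (i) self-map of the ball of radius 2A
    (∀ (ψ : ℝ × ℝ → ℝ) (q : ℝ → ℝ), Continuous ψ → Continuous q →
      (∀ p ∈ Δ, |ψ p| ≤ 2 * A) → (∀ y ∈ Icc (0:ℝ) lam, |q y| ≤ 2 * A) →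
      (∀ p ∈ Δ, |K₁ ψ q p| ≤ 2 * A) ∧ (∀ y ∈ Icc (0:ℝ) lam, |K₂ ψ q y| ≤ 2 * A)) ∧
    -- (ii) contraction with constant 3/8 in the norm ‖(ψ,q)‖ = max(‖ψ‖∞, ‖q‖∞)
    (∀ (ψ ψ' : ℝ × ℝ → ℝ) (q q' : ℝ → ℝ) (M : ℝ), Continuous ψ → Continuous ψ' →
      Continuous q → Continuous q' →
      (∀ p ∈ Δ, |ψ p| ≤ 2 * A) → (∀ y ∈ Icc (0:ℝ) lam, |q y| ≤ 2 * A) →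
      (∀ p ∈ Δ, |ψ' p| ≤ 2 * A) → (∀ y ∈ Icc (0:ℝ) lam, |q' y| ≤ 2 * A) →
      (∀ p ∈ Δ, |ψ p - ψ' p| ≤ M) → (∀ y ∈ Icc (0:ℝ) lam, |q y - q' y| ≤ M) →
      (∀ p ∈ Δ, |K₁ ψ q p - K₁ ψ' q' p| ≤ 3 / 8 * M) ∧
      (∀ y ∈ Icc (0:ℝ) lam, |K₂ ψ q y - K₂ ψ' q' y| ≤ 3 / 8 * M)) ∧
    -- (iii) existence of a fixed point in the ball, unique on the domain
    ((∃ (ψ : ℝ × ℝ → ℝ) (q : ℝ → ℝ), Continuous ψ ∧ Continuous q ∧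
        (∀ p ∈ Δ, |ψ p| ≤ 2 * A) ∧ (∀ y ∈ Icc (0:ℝ) lam, |q y| ≤ 2 * A) ∧
        (∀ p ∈ Δ, ψ p = K₁ ψ q p) ∧ (∀ y ∈ Icc (0:ℝ) lam, q y = K₂ ψ q y)) ∧
      (∀ (ψ ψ' : ℝ × ℝ → ℝ) (q q' : ℝ → ℝ), Continuous ψ → Continuous q →
        Continuous ψ' → Continuous q' →
        (∀ p ∈ Δ, |ψ p| ≤ 2 * A) → (∀ y ∈ Icc (0:ℝ) lam, |q y| ≤ 2 * A) →
        (∀ p ∈ Δ, |ψ' p| ≤ 2 * A) → (∀ y ∈ Icc (0:ℝ) lam, |q' y| ≤ 2 * A) →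
        (∀ p ∈ Δ, ψ p = K₁ ψ q p) → (∀ y ∈ Icc (0:ℝ) lam, q y = K₂ ψ q y) →
        (∀ p ∈ Δ, ψ' p = K₁ ψ' q' p) → (∀ y ∈ Icc (0:ℝ) lam, q' y = K₂ ψ' q' y) →
        (∀ p ∈ Δ, ψ p = ψ' p) ∧ ∀ y ∈ Icc (0:ℝ) lam, q y = q' y)) := by
  have hA0 : (0:ℝ) < A := by linarith
  have h16 : (0:ℝ) < 16 * (1 + A) ^ 2 := by positivity
  have hAl : A * lam ≤ 1 / 64 := by
    have h1 : A * lam ≤ A * (1 / (16 * (1 + A) ^ 2)) :=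
      mul_le_mul_of_nonneg_left hlam'.le hA0.le
    refine h1.trans ?_
    rw [mul_one_div, div_le_div_iff₀ h16 (by norm_num)]
    nlinarith [sq_nonneg (A - 1)]
  -- unpack membership in Δ
  have hmemΔ : ∀ p : ℝ × ℝ, p ∈ Δ ↔ (0 ≤ p.1 ∧ p.1 ≤ p.2 ∧ p.2 ≤ 2 * lam - p.1) := by
    intro p; rw [hΔ]; rfl
  -- Part (i)
  have hi : ∀ (ψ : ℝ × ℝ → ℝ) (q : ℝ → ℝ), Continuous ψ → Continuous q →
      (∀ p ∈ Δ, |ψ p| ≤ 2 * A) → (∀ y ∈ Icc (0:ℝ) lam, |q y| ≤ 2 * A) →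
      (∀ p ∈ Δ, |K₁ ψ q p| ≤ 2 * A) ∧ (∀ y ∈ Icc (0:ℝ) lam, |K₂ ψ q y| ≤ 2 * A) := by
    intro ψ q hψc hqc hψ hq
    have hψ' : ∀ a b : ℝ, 0 ≤ a → a ≤ b → b ≤ 2 * lam - a → |ψ (a, b)| ≤ 2 * A :=
      fun a b ha hab hb => hψ (a, b) ((hmemΔ (a, b)).mpr ⟨ha, hab, hb⟩)
    constructor
    · intro p hp
      obtain ⟨h1, h2, h3⟩ := (hmemΔ p).mp hp
      rw [hK₁]
      have hc := coreB hA hg₁ hψ' hq h1 h2 h3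
      have hy : p.1 ≤ lam := by linarith
      have habs := abs_add_le (-(∫ η in (0:ℝ)..p.1, q η * (g₁ (η, p.2 - η + p.1)
          + ∫ ζ in (0:ℝ)..η, ψ (ζ, p.2 - η + ζ)))) (g₂ p)
      rw [abs_neg] at habs
      have := arithA hA h1 hy hAl hc
      have hg := hg₂ p
      have hnn := abs_nonneg (∫ η in (0:ℝ)..p.1, q η * (g₁ (η, p.2 - η + p.1)
          + ∫ ζ in (0:ℝ)..η, ψ (ζ, p.2 - η + ζ)))
      linarith
    · intro s hs
      rw [hK₂, K2eq g₁ ψ q s]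
      have hc := coreB hA hg₁ hψ' hq (y := s) (t := s) hs.1 le_rfl (by linarith [hs.2])
      have habs := abs_add_le (-(2 * ∫ η in (0:ℝ)..s, q η * (g₁ (η, s - η + s)
          + ∫ ζ in (0:ℝ)..η, ψ (ζ, s - η + ζ)))) (g₃ s)
      rw [abs_neg, abs_mul, abs_two] at habs
      have := arithA hA hs.1 hs.2 hAl hc
      have hg := hg₃ s
      linarith
  -- Part (ii)
  have hii : ∀ (ψ ψ' : ℝ × ℝ → ℝ) (q q' : ℝ → ℝ) (M : ℝ), Continuous ψ → Continuous ψ' →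
      Continuous q → Continuous q' →
      (∀ p ∈ Δ, |ψ p| ≤ 2 * A) → (∀ y ∈ Icc (0:ℝ) lam, |q y| ≤ 2 * A) →
      (∀ p ∈ Δ, |ψ' p| ≤ 2 * A) → (∀ y ∈ Icc (0:ℝ) lam, |q' y| ≤ 2 * A) →
      (∀ p ∈ Δ, |ψ p - ψ' p| ≤ M) → (∀ y ∈ Icc (0:ℝ) lam, |q y - q' y| ≤ M) →
      (∀ p ∈ Δ, |K₁ ψ q p - K₁ ψ' q' p| ≤ 3 / 8 * M) ∧
      (∀ y ∈ Icc (0:ℝ) lam, |K₂ ψ q y - K₂ ψ' q' y| ≤ 3 / 8 * M) := by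
    intro ψ ψ' q q' M hψc hψ'c hqc hq'c hψb hqb hψ'b hq'b hdψ hdq
    have hψ2 : ∀ a b : ℝ, 0 ≤ a → a ≤ b → b ≤ 2 * lam - a → |ψ (a, b)| ≤ 2 * A :=
      fun a b ha hab hb => hψb (a, b) ((hmemΔ (a, b)).mpr ⟨ha, hab, hb⟩)
    have hdψ2 : ∀ a b : ℝ, 0 ≤ a → a ≤ b → b ≤ 2 * lam - a → |ψ (a, b) - ψ' (a, b)| ≤ M :=
      fun a b ha hab hb => hdψ (a, b) ((hmemΔ (a, b)).mpr ⟨ha, hab, hb⟩)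
    have hM0 : 0 ≤ M := le_trans (abs_nonneg _) (hdq 0 ⟨le_refl _, hlam.le⟩)
    constructor
    · intro p hp
      obtain ⟨h1, h2, h3⟩ := (hmemΔ p).mp hp
      rw [hK₁, hK₁]
      have hc := coreD hA hlam hψc hψ'c hqc hq'c hg₁c hg₁ hψ2 hq'b hdψ2 hdq h1 h2 h3
      have harith := arithB hA h1 (by linarith) hAl hM0 hc
      rw [show ∀ a b c : ℝ, (-a + c) - (-b + c) = -(a - b) from fun a b c => by ring, abs_neg]
      have := abs_nonneg ((∫ η in (0:ℝ)..p.1, q η * (g₁ (η, p.2 - η + p.1)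
          + ∫ ζ in (0:ℝ)..η, ψ (ζ, p.2 - η + ζ)))
        - ∫ η in (0:ℝ)..p.1, q' η * (g₁ (η, p.2 - η + p.1)
          + ∫ ζ in (0:ℝ)..η, ψ' (ζ, p.2 - η + ζ)))
      linarith
    · intro s hs
      rw [hK₂, hK₂, K2eq g₁ ψ q s, K2eq g₁ ψ' q' s]
      have hc := coreD hA hlam hψc hψ'c hqc hq'c hg₁c hg₁ hψ2 hq'b hdψ2 hdq
        (y := s) (t := s) hs.1 le_rfl (by linarith [hs.2])
      have harith := arithB hA hs.1 hs.2 hAl hM0 hc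
      rw [show ∀ a b c : ℝ, (-(2 * a) + c) - (-(2 * b) + c) = -(2 * (a - b))
        from fun a b c => by ring, abs_neg, abs_mul, abs_two]
      linarith [harith]
  refine ⟨hi, hii, ?_⟩
  -- Part (iii): common setup
  have hclosed : IsClosed Δ := by
    rw [hΔ]
    have : {p : ℝ × ℝ | 0 ≤ p.1 ∧ p.1 ≤ p.2 ∧ p.2 ≤ 2 * lam - p.1}
        = {p : ℝ × ℝ | 0 ≤ p.1} ∩ ({p : ℝ × ℝ | p.1 ≤ p.2} ∩ {p : ℝ × ℝ | p.2 ≤ 2 * lam - p.1}) := by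
      ext p; simp [Set.mem_setOf_eq, and_assoc]
    rw [this]
    exact (isClosed_le continuous_const continuous_fst).inter
      ((isClosed_le continuous_fst continuous_snd).inter
        (isClosed_le continuous_snd (by fun_prop)))
  have hcomp : IsCompact Δ := by
    refine IsCompact.of_isClosed_subset
      (isCompact_Icc (a := ((0:ℝ), (0:ℝ))) (b := (lam, 2 * lam))) hclosed ?_
    intro p hp
    obtain ⟨h1, h2, h3⟩ := (hmemΔ p).mp hp
    simp only [Set.mem_Icc, Prod.le_def]
    exact ⟨⟨h1, by linarith⟩, ⟨by linarith, by linarith⟩⟩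
  haveI iT : CompactSpace ↥Δ := isCompact_iff_compactSpace.mp hcomp
  haveI iI : CompactSpace ↥(Icc (0:ℝ) lam) := isCompact_iff_compactSpace.mp isCompact_Icc
  -- retraction facts
  have hrTmem : ∀ p : ℝ × ℝ, rT lam p ∈ Δ := fun p =>
    (hmemΔ _).mpr (rT_mem hlam.le p)
  -- continuity of K₁ / K₂ on continuous inputs
  have hK1c : ∀ (ψ : ℝ × ℝ → ℝ) (q : ℝ → ℝ), Continuous ψ → Continuous q →
      Continuous (K₁ ψ q) := by
    intro ψ q hψc hqc
    have he : K₁ ψ q = fun p : ℝ × ℝ => -(∫ η in (0:ℝ)..p.1, q η * (g₁ (η, p.2 - η + p.1)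
        + ∫ ζ in (0:ℝ)..η, ψ (ζ, p.2 - η + ζ))) + g₂ p := funext (hK₁ ψ q)
    rw [he]
    exact ((contK1core hg₁c hψc hqc).neg).add hg₂c
  have hK2c : ∀ (ψ : ℝ × ℝ → ℝ) (q : ℝ → ℝ), Continuous ψ → Continuous q →
      Continuous (K₂ ψ q) := by
    intro ψ q hψc hqc
    have he : K₂ ψ q = fun s : ℝ => -(2 * ∫ η in (0:ℝ)..s, q η * (g₁ (η, 2 * s - η)
        + ∫ ζ in (0:ℝ)..η, ψ (ζ, s - η + ζ))) + g₃ s := funext (hK₂ ψ q)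
    rw [he]
    exact ((continuous_const.mul (contK2core hg₁c hψc hqc)).neg).add hg₃c
  constructor
  · -- existence
    classical
    let X := C(↥Δ, ℝ) × C(↥(Icc (0:ℝ) lam), ℝ)
    let Ψ : X → ℝ × ℝ → ℝ := fun x p => x.1 ⟨rT lam p, hrTmem p⟩
    let Q : X → ℝ → ℝ := fun x s => x.2 ⟨rI lam s, rI_mem hlam.le s⟩
    have hΨc : ∀ x : X, Continuous (Ψ x) :=
      fun x => x.1.continuous.comp ((rT_cont lam).subtype_mk _)
    have hQc : ∀ x : X, Continuous (Q x) :=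
      fun x => x.2.continuous.comp ((rI_cont lam).subtype_mk _)
    let B : Set X := Metric.closedBall 0 (2 * A)
    have hmemB : ∀ x : X, x ∈ B ↔ ‖x‖ ≤ 2 * A := fun x => by
      rw [Metric.mem_closedBall, dist_zero_right]
    have hΨb : ∀ x : ↥B, ∀ p : ℝ × ℝ, |Ψ x.1 p| ≤ 2 * A := by
      intro x p
      rw [← Real.norm_eq_abs]
      refine (ContinuousMap.norm_coe_le_norm _ _).trans ?_
      have hx := (hmemB x.1).mp x.2
      rw [Prod.norm_def] at hx
      exact (le_max_left _ _).trans hx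
    have hQb : ∀ x : ↥B, ∀ s : ℝ, |Q x.1 s| ≤ 2 * A := by
      intro x s
      rw [← Real.norm_eq_abs]
      refine (ContinuousMap.norm_coe_le_norm _ _).trans ?_
      have hx := (hmemB x.1).mp x.2
      rw [Prod.norm_def] at hx
      exact (le_max_right _ _).trans hx
    let T : ↥B → ↥B := fun x =>
      ⟨(ContinuousMap.mk (fun v : ↥Δ => K₁ (Ψ x.1) (Q x.1) v.1)
          ((hK1c _ _ (hΨc x.1) (hQc x.1)).comp continuous_subtype_val),
        ContinuousMap.mk (fun u : ↥(Icc (0:ℝ) lam) => K₂ (Ψ x.1) (Q x.1) u.1)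
          ((hK2c _ _ (hΨc x.1) (hQc x.1)).comp continuous_subtype_val)),
       by
        rw [hmemB, Prod.norm_def]
        have hb := hi (Ψ x.1) (Q x.1) (hΨc x.1) (hQc x.1)
          (fun p _ => hΨb x p) (fun s _ => hQb x s)
        refine max_le ?_ ?_
        · rw [ContinuousMap.norm_le _ (by positivity)]
          intro v
          rw [Real.norm_eq_abs]
          exact hb.1 v.1 v.2
        · rw [ContinuousMap.norm_le _ (by positivity)]
          intro u
          rw [Real.norm_eq_abs]
          exact hb.2 u.1 u.2⟩
    have hT : ContractingWith (3/8 : NNReal) T := by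
      constructor
      · rw [← NNReal.coe_lt_coe]; norm_num
      · apply LipschitzWith.of_dist_le_mul
        intro x x'
        have hM0 : (0:ℝ) ≤ dist x x' := dist_nonneg
        have hcoe : ((3/8 : NNReal) : ℝ) = 3/8 := by norm_num
        rw [hcoe, Subtype.dist_eq, Prod.dist_eq]
        have hdist1 : dist (x.1).1 (x'.1).1 ≤ dist x x' := by
          rw [Subtype.dist_eq, Prod.dist_eq]; exact le_max_left _ _
        have hdist2 : dist (x.1).2 (x'.1).2 ≤ dist x x' := by
          rw [Subtype.dist_eq, Prod.dist_eq]; exact le_max_right _ _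
        have hdψ : ∀ p ∈ Δ, |Ψ x.1 p - Ψ x'.1 p| ≤ dist x x' := by
          intro p _
          rw [← Real.dist_eq]
          exact (ContinuousMap.dist_apply_le_dist _).trans hdist1
        have hdq : ∀ s ∈ Icc (0:ℝ) lam, |Q x.1 s - Q x'.1 s| ≤ dist x x' := by
          intro s _
          rw [← Real.dist_eq]
          exact (ContinuousMap.dist_apply_le_dist _).trans hdist2
        have hb := hii (Ψ x.1) (Ψ x'.1) (Q x.1) (Q x'.1) (dist x x')
          (hΨc x.1) (hΨc x'.1) (hQc x.1) (hQc x'.1)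
          (fun p _ => hΨb x p) (fun s _ => hQb x s)
          (fun p _ => hΨb x' p) (fun s _ => hQb x' s) hdψ hdq
        refine max_le ?_ ?_
        · rw [ContinuousMap.dist_le (by positivity)]
          intro v
          rw [Real.dist_eq]
          exact hb.1 v.1 v.2
        · rw [ContinuousMap.dist_le (by positivity)]
          intro u
          rw [Real.dist_eq]
          exact hb.2 u.1 u.2
    haveI : Nonempty ↥B := ⟨⟨0, Metric.mem_closedBall_self (by positivity)⟩⟩
    haveI : CompleteSpace ↥B := IsClosed.completeSpace_coe (hs := Metric.isClosed_closedBall)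
    let x₀ : ↥B := ContractingWith.fixedPoint T hT
    have hfix : T x₀ = x₀ := ContractingWith.fixedPoint_isFixedPt hT
    refine ⟨Ψ x₀.1, Q x₀.1, hΨc x₀.1, hQc x₀.1,
      fun p _ => hΨb x₀ p, fun s _ => hQb x₀ s, ?_, ?_⟩
    · intro p hp
      obtain ⟨h1, h2, h3⟩ := (hmemΔ p).mp hp
      have e : (⟨rT lam p, hrTmem p⟩ : ↥Δ) = ⟨p, hp⟩ := Subtype.ext (rT_id h1 h2 h3)
      show (x₀.1).1 ⟨rT lam p, hrTmem p⟩ = _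
      rw [e]
      conv_lhs => rw [← hfix]
      rfl
    · intro s hs
      have e : (⟨rI lam s, rI_mem hlam.le s⟩ : ↥(Icc (0:ℝ) lam)) = ⟨s, hs⟩ :=
        Subtype.ext (rI_id hs)
      show (x₀.1).2 ⟨rI lam s, rI_mem hlam.le s⟩ = _
      rw [e]
      conv_lhs => rw [← hfix]
      rfl
  · -- uniqueness
    intro ψ ψ' q q' hψc hqc hψ'c hq'c hψb hqb hψ'b hq'b hfp1 hfp2 hfp1' hfp2'
    let d1 : C(↥Δ, ℝ) := ContinuousMap.mk (fun v : ↥Δ => ψ v.1 - ψ' v.1)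
      ((hψc.comp continuous_subtype_val).sub (hψ'c.comp continuous_subtype_val))
    let d2 : C(↥(Icc (0:ℝ) lam), ℝ) := ContinuousMap.mk
      (fun u : ↥(Icc (0:ℝ) lam) => q u.1 - q' u.1)
      ((hqc.comp continuous_subtype_val).sub (hq'c.comp continuous_subtype_val))
    set M := max ‖d1‖ ‖d2‖ with hM
    have hM0 : 0 ≤ M := le_trans (norm_nonneg d1) (le_max_left _ _)
    have hb1 : ∀ p ∈ Δ, |ψ p - ψ' p| ≤ M := by
      intro p hp
      rw [← Real.norm_eq_abs]
      exact le_trans (d1.norm_coe_le_norm ⟨p, hp⟩) (le_max_left _ _)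
    have hb2 : ∀ s ∈ Icc (0:ℝ) lam, |q s - q' s| ≤ M := by
      intro s hs
      rw [← Real.norm_eq_abs]
      exact le_trans (d2.norm_coe_le_norm ⟨s, hs⟩) (le_max_right _ _)
    have hc := hii ψ ψ' q q' M hψc hψ'c hqc hq'c hψb hqb hψ'b hq'b hb1 hb2
    have hd1 : ‖d1‖ ≤ 3 / 8 * M := by
      rw [ContinuousMap.norm_le _ (by linarith)]
      intro v
      rw [Real.norm_eq_abs]
      show |ψ v.1 - ψ' v.1| ≤ 3 / 8 * M
      rw [hfp1 v.1 v.2, hfp1' v.1 v.2]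
      exact hc.1 v.1 v.2
    have hd2 : ‖d2‖ ≤ 3 / 8 * M := by
      rw [ContinuousMap.norm_le _ (by linarith)]
      intro u
      rw [Real.norm_eq_abs]
      show |q u.1 - q' u.1| ≤ 3 / 8 * M
      rw [hfp2 u.1 u.2, hfp2' u.1 u.2]
      exact hc.2 u.1 u.2
    have hMle : M ≤ 3 / 8 * M := max_le hd1 hd2
    have hMz : M = 0 := le_antisymm (by linarith) hM0
    constructor
    · intro p hp
      have h := hb1 p hp
      rw [hMz] at h
      exact sub_eq_zero.mp (abs_nonpos_iff.mp h)
    · intro s hs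
      have h := hb2 s hs
      rw [hMz] at h
      exact sub_eq_zero.mp (abs_nonpos_iff.mp h)
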